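/- Let n ≥ 1, let χ be a Dirichlet character mod n with conductor d (so d ∣ n), and let x > 1 be real. Then ∏_{j=1}^n (x^{gcd(j−1,n)} − 1)^{Re(χ(j))} = ∏_{δ ∣ n/d} Φ_{dδ}(x)^{φ(n)/φ(dδ)}, where on the left the exponents are real powers (rpow) of the positive reals x^{gcd(j−1,n)} − 1 (with gcd(0,n) = n for j = 1), and on the right each exponent φ(n)/φ(dδ) is a positive integer and Φ_{dδ}(x) > 0. -/

import Mathlib

open Complex Polynomial Finset

lemma aux_rpow_sum {ι : Type*} (s : Finset ι) (f : ι → ℝ) {x : ℝ} (hx : 0 < x) :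
    x ^ (∑ i ∈ s, f i) = ∏ i ∈ s, x ^ (f i) := by
  classical
  induction s using Finset.cons_induction with
  | empty => simp
  | cons a s ha ih => rw [Finset.sum_cons, Finset.prod_cons, Real.rpow_add hx, ih]

lemma aux_sum_hom {G : Type*} [CommGroup G] [Fintype G] (g : G →* ℂ) :
    ∑ a : G, g a = if ∀ a : G, g a = 1 then (Fintype.card G : ℂ) else 0 := by
  split_ifs with h
  · simp [h, Finset.card_univ]
  · push_neg at h
    obtain ⟨a, ha⟩ := h
    have key : ∑ b : G, g (a * b) = ∑ b : G, g b :=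
      Fintype.sum_bijective (a * ·) (Group.mulLeft_bijective a) _ _ (fun b => rfl)
    simp_rw [map_mul, ← Finset.mul_sum] at key
    have h2 : (g a - 1) * (∑ b : G, g b) = 0 := by rw [sub_mul, one_mul, key, sub_self]
    exact (mul_eq_zero.mp h2).resolve_left (sub_ne_zero.mpr ha)

lemma aux_divisors_gcd {a n : ℕ} (hn : n ≠ 0) :
    (Nat.gcd a n).divisors = n.divisors.filter (· ∣ a) := by
  ext k
  simp only [Nat.mem_divisors, Finset.mem_filter, Nat.dvd_gcd_iff]
  constructor
  · rintro ⟨⟨h1, h2⟩, _⟩; exact ⟨⟨h2, hn⟩, h1⟩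
  · rintro ⟨⟨h2, _⟩, h1⟩
    exact ⟨⟨h1, h2⟩, Nat.gcd_ne_zero_right hn⟩

lemma aux_factorsThrough_gcd {n : ℕ} [NeZero n] (χ : DirichletCharacter ℂ n) {a b : ℕ}
    (ha : a ∣ n) (hb : b ∣ n) (hfa : χ.FactorsThrough a) (hfb : χ.FactorsThrough b) :
    χ.FactorsThrough (Nat.gcd a b) := by
  have hg : Nat.gcd a b ∣ n := (Nat.gcd_dvd_left a b).trans ha
  rw [DirichletCharacter.factorsThrough_iff_ker_unitsMap hg]
  rw [DirichletCharacter.factorsThrough_iff_ker_unitsMap ha] at hfa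
  rw [DirichletCharacter.factorsThrough_iff_ker_unitsMap hb] at hfb
  intro u hu
  rw [MonoidHom.mem_ker] at hu
  set v : ℕ := (u : ZMod n).val with hv
  have hv1 : v ≡ 1 [MOD Nat.gcd a b] := by
    have h0 : ((v : ℕ) : ZMod (Nat.gcd a b)) = ((1 : ℕ) : ZMod (Nat.gcd a b)) := by
      have := congrArg (Units.val) hu
      rw [ZMod.unitsMap_def] at this
      simp only [Units.coe_map, MonoidHom.coe_coe, ZMod.castHom_apply, Units.val_one] at this
      rw [ZMod.natCast_val, Nat.cast_one]
      exact this
    exact (ZMod.natCast_eq_natCast_iff _ _ _).mp h0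
  obtain ⟨k, hka, hkb⟩ := Nat.chineseRemainder' hv1
  have hvn : Nat.Coprime v n := ZMod.val_coe_unit_coprime u
  have hku_a : ((k : ℕ) : ZMod a) = ((v : ℕ) : ZMod a) := (ZMod.natCast_eq_natCast_iff _ _ _).mpr hka
  have hk1_b : ((k : ℕ) : ZMod b) = 1 := by
    rw [(ZMod.natCast_eq_natCast_iff k 1 b).mpr hkb, Nat.cast_one]
  have hva : (v : ZMod a) = ZMod.castHom ha (ZMod a) (u : ZMod n) := by
    rw [ZMod.castHom_apply, ZMod.natCast_val]
  have hcop_a : Nat.Coprime (k : ℕ) a := by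
    rw [← ZMod.isUnit_iff_coprime, hku_a, hva]
    exact (u.isUnit).map _
  have hcop_b : Nat.Coprime (k : ℕ) b := by
    rw [← ZMod.isUnit_iff_coprime, hk1_b]; exact isUnit_one
  have hlcm : Nat.lcm a b ∣ n := Nat.lcm_dvd ha hb
  have hcop_l : Nat.Coprime (k : ℕ) (Nat.lcm a b) :=
    Nat.Coprime.coprime_dvd_right (Nat.lcm_dvd_mul a b) (hcop_a.mul_right hcop_b)
  haveI : NeZero (Nat.lcm a b) := ⟨fun h => NeZero.ne n (Nat.eq_zero_of_zero_dvd (h ▸ hlcm))⟩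
  obtain ⟨w, hw⟩ := ZMod.unitsMap_surjective hlcm (ZMod.unitOfCoprime k hcop_l)
  have hwl : ∀ (c : ℕ) (hc : c ∣ Nat.lcm a b),
      ZMod.unitsMap (hc.trans hlcm) w
        = Units.map (ZMod.castHom hc (ZMod c)) (ZMod.unitOfCoprime k hcop_l) := by
    intro c hc
    have : ZMod.unitsMap (hc.trans hlcm) w = ZMod.unitsMap hc (ZMod.unitsMap hlcm w) := by
      rw [← MonoidHom.comp_apply, ZMod.unitsMap_comp]
    rw [this, hw, ZMod.unitsMap_def]
  have hwb : ZMod.unitsMap hb w = 1 := by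
    have := hwl b (Nat.dvd_lcm_right a b)
    rw [show ((Nat.dvd_lcm_right a b).trans hlcm) = hb from rfl] at this
    rw [this]
    ext
    simp only [Units.coe_map, MonoidHom.coe_coe, ZMod.castHom_apply, Units.val_one,
      ZMod.coe_unitOfCoprime]
    rw [ZMod.cast_natCast (Nat.dvd_lcm_right a b), hk1_b]
  have hwa : ZMod.unitsMap ha w = ZMod.unitsMap ha u := by
    have := hwl a (Nat.dvd_lcm_left a b)
    rw [show ((Nat.dvd_lcm_left a b).trans hlcm) = ha from rfl] at this
    rw [this]
    ext
    simp only [Units.coe_map, MonoidHom.coe_coe, ZMod.castHom_apply, Units.val_one,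
      ZMod.coe_unitOfCoprime, ZMod.unitsMap_def]
    rw [ZMod.cast_natCast (Nat.dvd_lcm_left a b), hku_a, hva, ZMod.castHom_apply]
  have h1 : u * w⁻¹ ∈ (ZMod.unitsMap ha).ker := by
    rw [MonoidHom.mem_ker, map_mul, map_inv, hwa, mul_inv_cancel]
  have h2 : w ∈ (ZMod.unitsMap hb).ker := by rw [MonoidHom.mem_ker, hwb]
  have := mul_mem (hfa h1) (hfb h2)
  rwa [show (u * w⁻¹) * w = u by group] at this

lemma aux_conductor_dvd {n : ℕ} [NeZero n] (χ : DirichletCharacter ℂ n) {m : ℕ}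
    (hm : m ∣ n) (hf : χ.FactorsThrough m) : χ.conductor ∣ m := by
  have hg : χ.FactorsThrough (Nat.gcd χ.conductor m) :=
    aux_factorsThrough_gcd χ χ.conductor_dvd_level hm χ.factorsThrough_conductor hf
  have h1 : χ.conductor ≤ Nat.gcd χ.conductor m := Nat.sInf_le hg
  have hpos : 0 < χ.conductor :=
    Nat.pos_of_ne_zero (χ.conductor_ne_zero)
  have h2 : Nat.gcd χ.conductor m = χ.conductor :=
    Nat.le_antisymm (Nat.le_of_dvd hpos (Nat.gcd_dvd_left _ _)) h1
  exact h2 ▸ Nat.gcd_dvd_right χ.conductor m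

lemma aux_char_sum {n : ℕ} [NeZero n] (χ : DirichletCharacter ℂ n) {m : ℕ} (hm : m ∣ n) :
    ∑ c : ZMod n, (if (ZMod.castHom hm (ZMod m)) c = 1 then χ c else 0)
      = if χ.conductor ∣ m then ((n.totient / m.totient : ℕ) : ℂ) else 0 := by
  haveI : NeZero m := ⟨fun h => NeZero.ne n (Nat.eq_zero_of_zero_dvd (h ▸ hm))⟩
  set K := (ZMod.unitsMap hm).ker with hK
  have hcond : ∀ u : (ZMod n)ˣ,
      ((ZMod.castHom hm (ZMod m)) (u : ZMod n) = 1 ↔ ZMod.unitsMap hm u = 1) := by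
    intro u
    rw [Units.ext_iff]
    simp [ZMod.unitsMap_def]
  have step1 : ∑ c : ZMod n, (if (ZMod.castHom hm (ZMod m)) c = 1 then χ c else 0)
      = ∑ u : (ZMod n)ˣ, (if ZMod.unitsMap hm u = 1 then χ u else 0) := by
    rw [← Finset.sum_filter_of_ne (p := fun c => IsUnit c)
      (fun c _ h => by by_contra hnu; apply h; split_ifs; exacts [χ.map_nonunit hnu, rfl])]
    refine (Finset.sum_bij' (fun (u : (ZMod n)ˣ) _ => (u : ZMod n))
      (fun c hc => (Finset.mem_filter.mp hc).2.unit) (fun u _ => ?_) (fun c hc => Finset.mem_univ _)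
      (fun u _ => ?_) (fun c hc => ?_) (fun u _ => ?_)).symm
    · exact Finset.mem_filter.mpr ⟨Finset.mem_univ _, u.isUnit⟩
    · exact Units.ext (IsUnit.unit_spec _)
    · exact IsUnit.unit_spec _
    · have hc := hcond u
      rw [ZMod.castHom_apply] at hc
      simp [hc]
  rw [step1]
  have step2 : ∑ u : (ZMod n)ˣ, (if ZMod.unitsMap hm u = 1 then χ u else 0)
      = ∑ u : K, χ ((u : (ZMod n)ˣ) : ZMod n) := by
    rw [← Finset.sum_filter]
    exact Finset.sum_subtype _ (fun u => by
      simp only [Finset.mem_filter, Finset.mem_univ, true_and]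
      exact Iff.symm MonoidHom.mem_ker) _
  rw [step2]
  have step3 : ∑ u : K, χ ((u : (ZMod n)ˣ) : ZMod n)
      = if (∀ u : K, χ ((u : (ZMod n)ˣ) : ZMod n) = 1) then (Fintype.card K : ℂ) else 0 := by
    have := aux_sum_hom ((Units.coeHom ℂ).comp (χ.toUnitHom.comp K.subtype))
    simpa [MulChar.coe_toUnitHom] using this
  rw [step3]
  have hiff : (∀ u : K, χ ((u : (ZMod n)ˣ) : ZMod n) = 1) ↔ χ.conductor ∣ m := by
    constructor
    · intro h
      refine aux_conductor_dvd χ hm ?_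
      rw [DirichletCharacter.factorsThrough_iff_ker_unitsMap hm]
      intro u hu
      rw [MonoidHom.mem_ker]
      ext
      rw [MulChar.coe_toUnitHom, Units.val_one]
      exact h ⟨u, hu⟩
    · intro h u
      have hfc := (DirichletCharacter.factorsThrough_iff_ker_unitsMap
        χ.conductor_dvd_level).mp χ.factorsThrough_conductor
      have hu : u.1 ∈ (ZMod.unitsMap χ.conductor_dvd_level).ker := by
        rw [MonoidHom.mem_ker]
        have hcomp : ZMod.unitsMap χ.conductor_dvd_level u.1
            = ZMod.unitsMap h (ZMod.unitsMap hm u.1) := by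
          rw [← MonoidHom.comp_apply, ZMod.unitsMap_comp]
        have hmem : ZMod.unitsMap hm u.1 = 1 := u.2
        rw [hcomp, hmem, map_one]
      have h1 := hfc hu
      rw [MonoidHom.mem_ker] at h1
      have h2 := congrArg Units.val h1
      rwa [MulChar.coe_toUnitHom, Units.val_one] at h2
  rw [if_congr hiff rfl rfl]
  congr 1
  have hsurj := ZMod.unitsMap_surjective hm
  have hcards : Nat.card (ZMod n)ˣ = Nat.card ((ZMod n)ˣ ⧸ K) * Nat.card K :=
    Subgroup.card_eq_card_quotient_mul_card_subgroup K
  have hquot : Nat.card ((ZMod n)ˣ ⧸ K) = Nat.card (ZMod m)ˣ :=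
    Nat.card_congr (QuotientGroup.quotientKerEquivOfSurjective _ hsurj).toEquiv
  rw [hquot] at hcards
  rw [Nat.card_eq_fintype_card, ZMod.card_units_eq_totient] at hcards
  rw [Nat.card_eq_fintype_card, ZMod.card_units_eq_totient] at hcards
  have : n.totient / m.totient = Fintype.card K := by
    rw [← Nat.card_eq_fintype_card]
    exact Nat.div_eq_of_eq_mul_left (Nat.totient_pos.mpr (NeZero.pos m))
      (by rw [hcards, mul_comm])
  rw [this]

lemma aux_index_sum {n : ℕ} [NeZero n] (χ : DirichletCharacter ℂ n) {m : ℕ} (hm : m ∣ n) :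
    ∑ j ∈ Finset.Icc 1 n, (if m ∣ (j - 1) then (χ (j : ZMod n)).re else 0)
      = if χ.conductor ∣ m then ((n.totient / m.totient : ℕ) : ℝ) else 0 := by
  have key : ∑ j ∈ Finset.Icc 1 n, (if m ∣ (j - 1) then χ (j : ZMod n) else 0)
      = if χ.conductor ∣ m then ((n.totient / m.totient : ℕ) : ℂ) else 0 := by
    rw [← aux_char_sum χ hm]
    rw [← Finset.Ico_add_one_right_eq_Icc, Finset.sum_Ico_eq_sum_range]
    simp only [Nat.add_sub_cancel, Nat.add_sub_cancel_left]
    have e1 : ∑ c : ZMod n, (if (ZMod.castHom hm (ZMod m)) c = 1 then χ c else 0)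
        = ∑ c : ZMod n, (if (ZMod.castHom hm (ZMod m)) (1 + c) = 1 then χ (1 + c) else 0) :=
      (Fintype.sum_equiv (Equiv.addLeft (1 : ZMod n)) _ _ (fun c => rfl)).symm
    rw [e1]
    refine Finset.sum_nbij' (i := fun (i : ℕ) => ((i : ZMod n)))
      (j := fun (c : ZMod n) => c.val)
      (fun i _ => Finset.mem_univ _) (fun c _ => Finset.mem_range.mpr (ZMod.val_lt c))
      (fun i hi => ?_) (fun c _ => ?_) (fun i hi => ?_)
    · exact ZMod.val_cast_of_lt (Finset.mem_range.mp hi)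
    · exact ZMod.natCast_rightInverse c
    · have hcast : (ZMod.castHom hm (ZMod m)) (1 + (i : ZMod n)) = 1 + (i : ZMod m) := by
        rw [map_add, map_one, map_natCast]
      have hcond : ((ZMod.castHom hm (ZMod m)) (1 + (i : ZMod n)) = 1) ↔ m ∣ i := by
        rw [hcast, add_eq_left, ZMod.natCast_eq_zero_iff]
      simp only [hcond, Nat.cast_add, Nat.cast_one]
  calc ∑ j ∈ Finset.Icc 1 n, (if m ∣ (j - 1) then (χ (j : ZMod n)).re else 0)
      = (∑ j ∈ Finset.Icc 1 n, (if m ∣ (j - 1) then χ (j : ZMod n) else 0)).re := by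
        rw [Complex.re_sum]
        exact Finset.sum_congr rfl (fun j _ => by rw [apply_ite Complex.re, Complex.zero_re])
    _ = _ := by
        rw [key]
        split_ifs <;> simp

theorem stmt15 (n : ℕ) (hn : 1 ≤ n) (χ : DirichletCharacter ℂ n)
    (x : ℝ) (hx : 1 < x) :
    ∏ j ∈ Finset.Icc 1 n,
        (x ^ (Nat.gcd (j - 1) n) - 1) ^ ((χ (j : ZMod n)).re) =
      ∏ δ ∈ (n / χ.conductor).divisors,
        ((cyclotomic (χ.conductor * δ) ℝ).eval x) ^
          (Nat.totient n / Nat.totient (χ.conductor * δ)) := by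
  haveI : NeZero n := ⟨by omega⟩
  have hn0 : n ≠ 0 := by omega
  have hdn : χ.conductor ∣ n := χ.conductor_dvd_level
  have hd0 : χ.conductor ≠ 0 := χ.conductor_ne_zero
  have hcpos : ∀ k : ℕ, 0 < (cyclotomic k ℝ).eval x := fun k => cyclotomic_pos' k hx
  have stepA : ∀ j ∈ Finset.Icc 1 n,
      (x ^ (Nat.gcd (j - 1) n) - 1) ^ ((χ (j : ZMod n)).re)
        = ∏ m ∈ n.divisors, ((cyclotomic m ℝ).eval x)
            ^ (if m ∣ (j - 1) then (χ (j : ZMod n)).re else 0) := by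
    intro j hj
    have hg : 0 < Nat.gcd (j - 1) n := Nat.gcd_pos_of_pos_right _ (by omega)
    have h1 : x ^ (Nat.gcd (j - 1) n) - 1
        = ∏ m ∈ (Nat.gcd (j - 1) n).divisors, (cyclotomic m ℝ).eval x := by
      have h2 := congrArg (Polynomial.eval x) (prod_cyclotomic_eq_X_pow_sub_one hg ℝ)
      simpa [eval_prod] using h2.symm
    rw [h1, ← Real.finset_prod_rpow _ _ (fun m _ => (hcpos m).le), aux_divisors_gcd hn0,
      Finset.prod_filter]
    exact Finset.prod_congr rfl (fun m _ => by
      split_ifs with h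
      · rfl
      · exact (Real.rpow_zero _).symm)
  calc ∏ j ∈ Finset.Icc 1 n, (x ^ (Nat.gcd (j - 1) n) - 1) ^ ((χ (j : ZMod n)).re)
      = ∏ j ∈ Finset.Icc 1 n, ∏ m ∈ n.divisors,
          ((cyclotomic m ℝ).eval x) ^ (if m ∣ (j - 1) then (χ (j : ZMod n)).re else 0) :=
        Finset.prod_congr rfl stepA
    _ = ∏ m ∈ n.divisors, ∏ j ∈ Finset.Icc 1 n,
          ((cyclotomic m ℝ).eval x) ^ (if m ∣ (j - 1) then (χ (j : ZMod n)).re else 0) :=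
        Finset.prod_comm
    _ = ∏ m ∈ n.divisors, ((cyclotomic m ℝ).eval x)
          ^ (∑ j ∈ Finset.Icc 1 n, if m ∣ (j - 1) then (χ (j : ZMod n)).re else 0) :=
        Finset.prod_congr rfl (fun m _ => (aux_rpow_sum _ _ (hcpos m)).symm)
    _ = ∏ m ∈ n.divisors, ((cyclotomic m ℝ).eval x)
          ^ (if χ.conductor ∣ m then ((n.totient / m.totient : ℕ) : ℝ) else 0) :=
        Finset.prod_congr rfl (fun m hm => by
          rw [aux_index_sum χ (Nat.mem_divisors.mp hm).1])
    _ = ∏ m ∈ n.divisors.filter (χ.conductor ∣ ·),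
          ((cyclotomic m ℝ).eval x) ^ ((n.totient / m.totient : ℕ) : ℝ) := by
        rw [Finset.prod_filter]
        exact Finset.prod_congr rfl (fun m _ => by
          split_ifs with h
          · rfl
          · exact Real.rpow_zero _)
    _ = ∏ m ∈ n.divisors.filter (χ.conductor ∣ ·),
          ((cyclotomic m ℝ).eval x) ^ (n.totient / m.totient : ℕ) :=
        Finset.prod_congr rfl (fun m _ => Real.rpow_natCast _ _)
    _ = ∏ δ ∈ (n / χ.conductor).divisors,
          ((cyclotomic (χ.conductor * δ) ℝ).eval x)
            ^ (Nat.totient n / Nat.totient (χ.conductor * δ)) := by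
        refine Finset.prod_nbij' (i := fun m => m / χ.conductor)
          (j := fun δ => χ.conductor * δ) ?_ ?_ ?_ ?_ ?_
        · intro m hm
          obtain ⟨hmmem, hdm⟩ := Finset.mem_filter.mp hm
          obtain ⟨hmn, _⟩ := Nat.mem_divisors.mp hmmem
          refine Nat.mem_divisors.mpr ⟨?_, ?_⟩
          · obtain ⟨k, hk⟩ := hdm
            obtain ⟨t, ht⟩ := hmn
            refine ⟨t, ?_⟩
            show n / χ.conductor = m / χ.conductor * t
            have hmk : m / χ.conductor = k := by
              rw [hk]; exact Nat.mul_div_cancel_left _ (Nat.pos_of_ne_zero hd0)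
            rw [hmk]
            exact Nat.div_eq_of_eq_mul_left (Nat.pos_of_ne_zero hd0)
              (ht.trans (by rw [hk]; ring))
          · exact Nat.div_ne_zero_iff.mpr ⟨hd0,
              (Nat.le_of_dvd (Nat.pos_of_ne_zero hn0) hdn)⟩
        · intro δ hδ
          obtain ⟨hδd, _⟩ := Nat.mem_divisors.mp hδ
          refine Finset.mem_filter.mpr ⟨Nat.mem_divisors.mpr ⟨?_, hn0⟩, Dvd.intro δ rfl⟩
          calc χ.conductor * δ ∣ χ.conductor * (n / χ.conductor) :=
                mul_dvd_mul_left _ hδd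
            _ = n := Nat.mul_div_cancel' hdn
        · intro m hm
          exact Nat.mul_div_cancel' (Finset.mem_filter.mp hm).2
        · intro δ hδ
          exact Nat.mul_div_cancel_left _ (Nat.pos_of_ne_zero hd0)
        · intro m hm
          rw [Nat.mul_div_cancel' (Finset.mem_filter.mp hm).2]
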